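/- Fix real constants m₁ ≠ 0, m₂ ≠ 0, k, t. The map T : ℝ⁴ → ℝ⁴ given by T(x', y', p'₁, p'₂) = (x, y, p₁, p₂) with x = x' − (t/m₁)p'₁ − (k/(2m₁))t² p'₂², y = y' − (t/m₂)p'₂ − 2kt x' p'₂ + (k/m₁)t² p'₁ p'₂ + (k²/(3m₁))t³ p'₂³, p₁ = p'₁ + kt p'₂², p₂ = p'₂, is a classical canonical transformation: at every point its Jacobian matrix DT satisfies (DT)^T Ω (DT) = Ω, where Ω is the standard symplectic matrix for the form dx ∧ dp₁ + dy ∧ dp₂. -/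

import Mathlib

open Matrix

/-- The Jacobian matrix of a map `T : ℝ⁴ → ℝ⁴` at a point `z`:
`(DT(z))_{ij} = ∂T^i/∂z^j (z)`. -/
noncomputable def jac4 (T : (Fin 4 → ℝ) → (Fin 4 → ℝ)) (z : Fin 4 → ℝ) :
    Matrix (Fin 4) (Fin 4) ℝ :=
  fun i j => fderiv ℝ T z (Pi.single j 1) i

/-- The standard symplectic matrix for the form `dx ∧ dp₁ + dy ∧ dp₂` in the
coordinate ordering `(x, y, p₁, p₂)`: `Ω = [[0, I₂], [−I₂, 0]]`. -/
def Omega4 : Matrix (Fin 4) (Fin 4) ℝ :=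
  !![0, 0, 1, 0; 0, 0, 0, 1; -1, 0, 0, 0; 0, -1, 0, 0]

noncomputable abbrev pr4 (i : Fin 4) : (Fin 4 → ℝ) →L[ℝ] ℝ :=
  ContinuousLinearMap.proj i

set_option maxHeartbeats 2000000 in
/-- Fix real constants m₁ ≠ 0, m₂ ≠ 0, k, t.  The map `T(x',y',p'₁,p'₂) = (x,y,p₁,p₂)`
with `x = x' − (t/m₁)p'₁ − (k/(2m₁))t² p'₂²`,
`y = y' − (t/m₂)p'₂ − 2kt x' p'₂ + (k/m₁)t² p'₁ p'₂ + (k²/(3m₁))t³ p'₂³`,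
`p₁ = p'₁ + kt p'₂²`, `p₂ = p'₂`
is a classical canonical transformation: `(DT)ᵀ Ω (DT) = Ω` at every point. -/
theorem two_particle_flow_is_canonical (m₁ m₂ k t : ℝ) (hm₁ : m₁ ≠ 0) (hm₂ : m₂ ≠ 0)
    (T : (Fin 4 → ℝ) → (Fin 4 → ℝ))
    (hT : ∀ z : Fin 4 → ℝ, T z =
      ![z 0 - (t / m₁) * z 2 - (k / (2 * m₁)) * t ^ 2 * (z 3) ^ 2,
        z 1 - (t / m₂) * z 3 - 2 * k * t * z 0 * z 3 + (k / m₁) * t ^ 2 * z 2 * z 3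
          + (k ^ 2 / (3 * m₁)) * t ^ 3 * (z 3) ^ 3,
        z 2 + k * t * (z 3) ^ 2,
        z 3]) :
    ∀ z : Fin 4 → ℝ, (jac4 T z)ᵀ * Omega4 * jac4 T z = Omega4 := by
  have hTfun : T = fun z => ![z 0 - (t / m₁) * z 2 - (k / (2 * m₁)) * t ^ 2 * (z 3) ^ 2,
        z 1 - (t / m₂) * z 3 - 2 * k * t * z 0 * z 3 + (k / m₁) * t ^ 2 * z 2 * z 3
          + (k ^ 2 / (3 * m₁)) * t ^ 3 * (z 3) ^ 3,
        z 2 + k * t * (z 3) ^ 2,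
        z 3] := funext hT
  subst hTfun
  intro z
  have hz : ∀ i : Fin 4, HasFDerivAt (fun f : Fin 4 → ℝ => f i) (pr4 i) z :=
    fun i => hasFDerivAt_apply i z
  have h0 : HasFDerivAt
      (fun z : Fin 4 → ℝ => z 0 - (t / m₁) * z 2 - (k / (2 * m₁)) * t ^ 2 * (z 3) ^ 2)
      (pr4 0 - (t / m₁) • pr4 2 - ((k / m₁) * t ^ 2 * z 3) • pr4 3) z := by
    have H := ((hz 0).sub (((hz 2)).const_mul (t / m₁))).sub
      ((((hz 3)).mul (hz 3)).const_mul ((k / (2 * m₁)) * t ^ 2))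
    convert H using 1
    iterate 5 rfl
    · funext v; simp only [Pi.sub_apply, Pi.add_apply, Pi.mul_apply, Pi.pow_apply]; ring
    · ext v
      simp [ContinuousLinearMap.proj_apply]
      field_simp
      ring
  have h1 : HasFDerivAt
      (fun z : Fin 4 → ℝ => z 1 - (t / m₂) * z 3 - 2 * k * t * z 0 * z 3
        + (k / m₁) * t ^ 2 * z 2 * z 3 + (k ^ 2 / (3 * m₁)) * t ^ 3 * (z 3) ^ 3)
      ((-(2 * k * t * z 3)) • pr4 0 + pr4 1 + ((k / m₁) * t ^ 2 * z 3) • pr4 2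
        + (-(t / m₂) - 2 * k * t * z 0 + (k / m₁) * t ^ 2 * z 2
            + (k ^ 2 / m₁) * t ^ 3 * (z 3) ^ 2) • pr4 3) z := by
    have H := ((((hz 1).sub ((hz 3).const_mul (t / m₂))).sub
        ((((hz 0).const_mul (2 * k * t)).mul (hz 3)))).add
        ((((hz 2).const_mul ((k / m₁) * t ^ 2)).mul (hz 3)))).add
        ((((hz 3).mul (hz 3)).mul (hz 3)).const_mul ((k ^ 2 / (3 * m₁)) * t ^ 3))
    convert H using 1
    iterate 5 rfl
    · funext v; simp only [Pi.sub_apply, Pi.add_apply, Pi.mul_apply, Pi.pow_apply]; ring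
    · ext v
      simp [ContinuousLinearMap.proj_apply]
      field_simp
      ring
  have h2 : HasFDerivAt (fun z : Fin 4 → ℝ => z 2 + k * t * (z 3) ^ 2)
      (pr4 2 + (2 * k * t * z 3) • pr4 3) z := by
    have H := (hz 2).add ((((hz 3)).mul (hz 3)).const_mul (k * t))
    convert H using 1
    iterate 5 rfl
    · funext v; simp only [Pi.sub_apply, Pi.add_apply, Pi.mul_apply, Pi.pow_apply]; ring
    · ext v
      simp [ContinuousLinearMap.proj_apply]
      ring
  have h3 : HasFDerivAt (fun z : Fin 4 → ℝ => z 3) (pr4 3) z := hz 3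
  have hfd : HasFDerivAt
      (fun z : Fin 4 → ℝ => ![z 0 - (t / m₁) * z 2 - (k / (2 * m₁)) * t ^ 2 * (z 3) ^ 2,
        z 1 - (t / m₂) * z 3 - 2 * k * t * z 0 * z 3 + (k / m₁) * t ^ 2 * z 2 * z 3
          + (k ^ 2 / (3 * m₁)) * t ^ 3 * (z 3) ^ 3,
        z 2 + k * t * (z 3) ^ 2,
        z 3])
      (ContinuousLinearMap.pi
        ![pr4 0 - (t / m₁) • pr4 2 - ((k / m₁) * t ^ 2 * z 3) • pr4 3,
          (-(2 * k * t * z 3)) • pr4 0 + pr4 1 + ((k / m₁) * t ^ 2 * z 3) • pr4 2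
            + (-(t / m₂) - 2 * k * t * z 0 + (k / m₁) * t ^ 2 * z 2
                + (k ^ 2 / m₁) * t ^ 3 * (z 3) ^ 2) • pr4 3,
          pr4 2 + (2 * k * t * z 3) • pr4 3,
          pr4 3]) z := by
    apply hasFDerivAt_pi'.2
    intro i
    fin_cases i
    · simpa using h0
    · simpa using h1
    · simpa using h2
    · simpa using h3
  have hjac : jac4 (fun z : Fin 4 → ℝ =>
      ![z 0 - (t / m₁) * z 2 - (k / (2 * m₁)) * t ^ 2 * (z 3) ^ 2,
        z 1 - (t / m₂) * z 3 - 2 * k * t * z 0 * z 3 + (k / m₁) * t ^ 2 * z 2 * z 3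
          + (k ^ 2 / (3 * m₁)) * t ^ 3 * (z 3) ^ 3,
        z 2 + k * t * (z 3) ^ 2,
        z 3]) z =
      !![1, 0, -(t / m₁), -((k / m₁) * t ^ 2 * z 3);
         -(2 * k * t * z 3), 1, (k / m₁) * t ^ 2 * z 3,
           -(t / m₂) - 2 * k * t * z 0 + (k / m₁) * t ^ 2 * z 2 + (k ^ 2 / m₁) * t ^ 3 * (z 3) ^ 2;
         0, 0, 1, 2 * k * t * z 3;
         0, 0, 0, 1] := by
    funext i j
    simp only [jac4]
    rw [hfd.fderiv]
    fin_cases i <;> fin_cases j <;>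
      simp [ContinuousLinearMap.proj_apply, Pi.single_apply, Matrix.vecHead, Matrix.vecTail]
  rw [hjac]
  ext i j
  fin_cases i <;> fin_cases j <;>
    simp [Omega4, Matrix.mul_apply, Fin.sum_univ_four, Matrix.transpose_apply,
      Matrix.vecHead, Matrix.vecTail, Function.comp] <;>
    ring
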